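/- Let F be an algebraically closed field of characteristic different from 2. Then every full flag 0 ⊂ Fv₁ ⊂ V₂ ⊂ F³ satisfies exactly one of the four properties (O), (LC1), (LC2), (C). -/
import Mathlib


open Matrix

/-- The standard symmetric bilinear form on `R³`: `(v,w) = ∑ i, v i * w i`. -/
def bil {R : Type*} [CommRing R] (v w : Fin 3 → R) : R := ∑ j, v j * w j

/-- The `j`-th column of a 3×3 matrix. -/
def vcol {R : Type*} (g : Matrix (Fin 3) (Fin 3) R) (j : Fin 3) : Fin 3 → R :=
  fun i => g i j

/-- Membership in `SO(3,R)`: `kᵀk = 1` and `det k = 1`. -/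
def SO3 {R : Type*} [CommRing R] (g : Matrix (Fin 3) (Fin 3) R) : Prop :=
  gᵀ * g = 1 ∧ g.det = 1

/-- A 3×3 matrix is upper triangular. -/
def UpperTri {R : Type*} [CommRing R] (b : Matrix (Fin 3) (Fin 3) R) : Prop :=
  ∀ i j : Fin 3, j < i → b i j = 0

/-- `c₁(g) = (v₁(g), v₁(g))`. -/
def c1 {R : Type*} [CommRing R] (g : Matrix (Fin 3) (Fin 3) R) : R :=
  bil (vcol g 0) (vcol g 0)

/-- `c₂(g) = (v₁(g),v₁(g))(v₂(g),v₂(g)) − (v₁(g),v₂(g))²`. -/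
def c2 {R : Type*} [CommRing R] (g : Matrix (Fin 3) (Fin 3) R) : R :=
  bil (vcol g 0) (vcol g 0) * bil (vcol g 1) (vcol g 1) - (bil (vcol g 0) (vcol g 1)) ^ 2

/-- `c₃(g) = (v₁(g), v₂(g))`. -/
def c3 {R : Type*} [CommRing R] (g : Matrix (Fin 3) (Fin 3) R) : R :=
  bil (vcol g 0) (vcol g 1)

lemma bil_lin {F : Type*} [Field F] (u x y : Fin 3 → F) (a b : F) :
    bil u (a • x + b • y) = a * bil u x + b * bil u y := by
  simp [bil, Fin.sum_univ_three]; ring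

lemma key_flag {F : Type*} [Field F] (v₁ v : Fin 3 → F) (hv₁ : v₁ ≠ 0)
    (V₂ : Submodule F (Fin 3 → F)) (hmem : v₁ ∈ V₂) (hdim : Module.finrank F V₂ = 2)
    (hv : v ∈ V₂) (hns : v ∉ Submodule.span F {v₁})
    (h0 : bil v₁ v₁ = 0) (h1 : bil v₁ v = 0) :
    ∀ w ∈ V₂, bil v₁ w = 0 := by
  have hli : LinearIndependent F ![v₁, v] := by
    rw [LinearIndependent.pair_iff]
    intro s t hst
    have ht : t = 0 := by
      by_contra ht
      apply hns
      have h2 : t • v = (-s) • v₁ := by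
        linear_combination (norm := module) hst
      have hveq : v = (t⁻¹ * (-s)) • v₁ := by
        rw [mul_smul, ← h2, smul_smul, inv_mul_cancel₀ ht, one_smul]
      rw [hveq]
      exact Submodule.smul_mem _ _ (Submodule.mem_span_singleton_self v₁)
    subst ht
    rw [zero_smul, add_zero, smul_eq_zero] at hst
    exact ⟨hst.resolve_right hv₁, rfl⟩
  have hspan : Submodule.span F {v₁, v} = V₂ := by
    apply Submodule.eq_of_le_of_finrank_le
    · rw [Submodule.span_le]; intro x hx
      rcases hx with h | h
      · subst h; exact hmem
      · simp at h; subst h; exact hv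
    · rw [hdim]
      have h2 : Module.finrank F (Submodule.span F (Set.range ![v₁, v])) = 2 := by
        rw [finrank_span_eq_card hli]; simp
      have hr : (Set.range ![v₁, v]) = {v₁, v} := by
        simp [Matrix.range_cons, Matrix.range_empty, Set.pair_comm v v₁]
      rw [hr] at h2
      omega
  intro w hw
  rw [← hspan, Submodule.mem_span_pair] at hw
  obtain ⟨a, b, rfl⟩ := hw
  rw [bil_lin, h0, h1]; ring

theorem flag_exactly_one_property {F : Type*} [Field F] [IsAlgClosed F]
    (hchar : (2 : F) ≠ 0) (v₁ : Fin 3 → F) (hv₁ : v₁ ≠ 0)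
    (V₂ : Submodule F (Fin 3 → F)) (hmem : v₁ ∈ V₂)
    (hdim : Module.finrank F V₂ = 2) :
    ∃! j : Fin 4,
      ![ -- Property (O)
         bil v₁ v₁ ≠ 0 ∧ ∀ v ∈ V₂, v ≠ 0 → (bil v₁ v ≠ 0 ∨ bil v v ≠ 0),
         -- Property (LC1)
         bil v₁ v₁ = 0 ∧ ∀ v ∈ V₂, v ∈ Submodule.span F {v₁} ∨ bil v₁ v ≠ 0,
         -- Property (LC2)
         bil v₁ v₁ ≠ 0 ∧ ∃ v ∈ V₂, v ≠ 0 ∧ bil v₁ v = 0 ∧ bil v v = 0,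
         -- Property (C)
         bil v₁ v₁ = 0 ∧ ∀ v ∈ V₂, bil v₁ v = 0 ] j := by
  classical
  by_cases h1 : bil v₁ v₁ = 0
  · by_cases hC : ∀ v ∈ V₂, bil v₁ v = 0
    · refine ⟨3, ⟨h1, hC⟩, ?_⟩
      intro y hy
      have hex : ∃ v ∈ V₂, v ∉ Submodule.span F {v₁} := by
        by_contra h
        push_neg at h
        have hle : V₂ ≤ Submodule.span F {v₁} := h
        have hmono := Submodule.finrank_mono hle
        rw [hdim, finrank_span_singleton hv₁] at hmono
        omega
      obtain ⟨v, hvV, hvs⟩ := hex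
      fin_cases y
      · exact absurd h1 hy.1
      · rcases hy.2 v hvV with h | h
        · exact absurd h hvs
        · exact absurd (hC v hvV) h
      · exact absurd h1 hy.1
      · rfl
    · push_neg at hC
      obtain ⟨u, huV, hu⟩ := hC
      have hLC1 : ∀ v ∈ V₂, v ∈ Submodule.span F {v₁} ∨ bil v₁ v ≠ 0 := by
        intro v hvV
        by_contra h
        push_neg at h
        exact hu (key_flag v₁ v hv₁ V₂ hmem hdim hvV h.1 h1 h.2 u huV)
      refine ⟨1, ⟨h1, hLC1⟩, ?_⟩
      intro y hy
      fin_cases y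
      · exact absurd h1 hy.1
      · rfl
      · exact absurd h1 hy.1
      · exact absurd (hy.2 u huV) hu
  · by_cases hO : ∀ v ∈ V₂, v ≠ 0 → (bil v₁ v ≠ 0 ∨ bil v v ≠ 0)
    · refine ⟨0, ⟨h1, hO⟩, ?_⟩
      intro y hy
      fin_cases y
      · rfl
      · exact absurd hy.1 h1
      · obtain ⟨v, hvV, hvne, hb1, hb2⟩ := hy.2
        rcases hO v hvV hvne with h | h
        · exact absurd hb1 h
        · exact absurd hb2 h
      · exact absurd hy.1 h1
    · push_neg at hO
      obtain ⟨v, hvV, hvne, hb1, hb2⟩ := hO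
      refine ⟨2, ⟨h1, v, hvV, hvne, hb1, hb2⟩, ?_⟩
      intro y hy
      fin_cases y
      · rcases hy.2 v hvV hvne with h | h
        · exact absurd hb1 h
        · exact absurd hb2 h
      · exact absurd hy.1 h1
      · rfl
      · exact absurd hy.1 h1
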